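/- Let T have the wandering subspace property and suppose w is a bounded point evaluation for T. Then H is the closed linear span of ⋃_{n∈ℕ} (T − w)^n (ker T*), and consequently the orthogonal projection P_w onto ker(T* − w̄) maps ker T* onto ker(T* − w̄). -/

import Mathlib

open ContinuousLinearMap Submodule Filter

noncomputable section

variable {H : Type*} [NormedAddCommGroup H] [InnerProductSpace ℂ H] [CompleteSpace H]

/-- The wandering subspace `ker T*`. -/
def kerAdj (T : H →L[ℂ] H) : Submodule ℂ H := LinearMap.ker ((ContinuousLinearMap.adjoint T : H →L[ℂ] H) : H →ₗ[ℂ] H)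

/-- `T` has the wandering subspace property: the closed linear span of
`⋃ₙ Tⁿ(ker T*)` is all of `H`. -/
def WSP (T : H →L[ℂ] H) : Prop :=
  (⨆ n : ℕ, (kerAdj T).map (((T ^ n : H →L[ℂ] H)) : H →ₗ[ℂ] H)).topologicalClosure = ⊤

/-- `w` is a bounded point evaluation for `T`: `‖p(w)‖ ≤ c ‖p(T)‖` for all
`ker T*`-valued polynomials `p`, where `p(T) = Σ Tⁿ xₙ` for `p(z) = Σ xₙ zⁿ`. -/
def IsBPE (T : H →L[ℂ] H) (w : ℂ) : Prop :=
  ∃ c > (0 : ℝ), ∀ (k : ℕ) (x : ℕ → H), (∀ n, x n ∈ kerAdj T) →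
    ‖∑ n ∈ Finset.range (k + 1), w ^ n • x n‖ ≤
      c * ‖∑ n ∈ Finset.range (k + 1), (T ^ n) (x n)‖

/-- `E` is the (continuous extension of the) evaluation operator at `w`:
it takes values in `ker T*` and sends `p(T)` to `p(w)`. -/
def IsEval (T : H →L[ℂ] H) (w : ℂ) (E : H →L[ℂ] H) : Prop :=
  (∀ y, E y ∈ kerAdj T) ∧
    ∀ (k : ℕ) (x : ℕ → H), (∀ n, x n ∈ kerAdj T) →
      E (∑ n ∈ Finset.range (k + 1), (T ^ n) (x n)) =
        ∑ n ∈ Finset.range (k + 1), w ^ n • x n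

local notation "⟪" x ", " y "⟫" => @inner ℂ _ _ x y

lemma aux_sum_pad {M : Type*} [AddCommMonoid M] (k K : ℕ) (hkK : k + 1 ≤ K + 1) (x : ℕ → M)
    (G : ℕ → M → M) (hG : ∀ n, G n 0 = 0) :
    ∑ n ∈ Finset.range (K + 1), G n (if n < k + 1 then x n else 0)
      = ∑ n ∈ Finset.range (k + 1), G n (x n) := by
  rw [← Finset.sum_subset (Finset.range_subset_range.mpr hkK)
    (fun n _ hn => by rw [if_neg (by simpa using hn), hG])]
  exact Finset.sum_congr rfl fun n hn => by rw [if_pos (Finset.mem_range.1 hn)]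

/-- The sup of the ranges of powers is invariant under T. -/
lemma aux_T_mem (T : H →L[ℂ] H) (E : Submodule ℂ H) {h : H}
    (hh : h ∈ ⨆ n : ℕ, E.map ((T ^ n : H →L[ℂ] H) : H →ₗ[ℂ] H)) : T h ∈ ⨆ n : ℕ, E.map ((T ^ n : H →L[ℂ] H) : H →ₗ[ℂ] H) := by
  refine Submodule.iSup_induction (motive := fun v => T v ∈ ⨆ n : ℕ, E.map ((T ^ n : H →L[ℂ] H) : H →ₗ[ℂ] H))
    (fun n : ℕ => E.map ((T ^ n : H →L[ℂ] H) : H →ₗ[ℂ] H)) hh ?_ (by simp) ?_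
  · rintro n v hv
    obtain ⟨x, hx, rfl⟩ := hv
    have : T ((T ^ n) x) = (T ^ (n + 1)) x := by
      rw [pow_succ']; rfl
    rw [ContinuousLinearMap.coe_coe, this]
    exact le_iSup (fun n : ℕ => E.map ((T ^ n : H →L[ℂ] H) : H →ₗ[ℂ] H)) (n + 1) ⟨x, hx, rfl⟩
  · intro a b ha hb
    rw [map_add]
    exact Submodule.add_mem _ ha hb

lemma aux_le_sup (T : H →L[ℂ] H) (c : ℂ) (E : Submodule ℂ H) :
    (⨆ n : ℕ, E.map (((T + c • (1 : H →L[ℂ] H)) ^ n : H →L[ℂ] H) : H →ₗ[ℂ] H)) ≤ ⨆ n : ℕ, E.map ((T ^ n : H →L[ℂ] H) : H →ₗ[ℂ] H) := by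
  have key : ∀ n : ℕ, ∀ x ∈ E, ((T + c • (1 : H →L[ℂ] H)) ^ n) x ∈ ⨆ n : ℕ, E.map ((T ^ n : H →L[ℂ] H) : H →ₗ[ℂ] H) := by
    intro n
    induction n with
    | zero =>
      intro x hx
      simpa using le_iSup (fun n : ℕ => E.map ((T ^ n : H →L[ℂ] H) : H →ₗ[ℂ] H)) 0 ⟨x, hx, by simp⟩
    | succ n ih =>
      intro x hx
      have : ((T + c • (1 : H →L[ℂ] H)) ^ (n + 1)) x
          = T (((T + c • (1 : H →L[ℂ] H)) ^ n) x) + c • (((T + c • (1 : H →L[ℂ] H)) ^ n) x) := by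
        rw [pow_succ']
        simp [mul_apply]
      rw [this]
      exact Submodule.add_mem _ (aux_T_mem T E (ih x hx)) (Submodule.smul_mem _ _ (ih x hx))
  apply iSup_le
  rintro n _ ⟨x, hx, rfl⟩
  exact key n x hx

lemma aux_sup_eq (T : H →L[ℂ] H) (w : ℂ) (E : Submodule ℂ H) :
    (⨆ n : ℕ, E.map (((T - w • (1 : H →L[ℂ] H)) ^ n : H →L[ℂ] H) : H →ₗ[ℂ] H)) = ⨆ n : ℕ, E.map ((T ^ n : H →L[ℂ] H) : H →ₗ[ℂ] H) := by
  apply le_antisymm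
  · have := aux_le_sup T (-w) E
    rwa [neg_smul, ← sub_eq_add_neg] at this
  · have := aux_le_sup (T - w • (1 : H →L[ℂ] H)) w E
    rwa [sub_add_cancel] at this

lemma aux_rep (T : H →L[ℂ] H) {h : H} (hh : h ∈ ⨆ n : ℕ, (kerAdj T).map ((T ^ n : H →L[ℂ] H) : H →ₗ[ℂ] H)) :
    ∃ (k : ℕ) (x : ℕ → H), (∀ n, x n ∈ kerAdj T) ∧
      h = ∑ n ∈ Finset.range (k + 1), (T ^ n) (x n) := by
  refine Submodule.iSup_induction (motive := fun v => ∃ (k : ℕ) (x : ℕ → H),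
      (∀ n, x n ∈ kerAdj T) ∧ v = ∑ n ∈ Finset.range (k + 1), (T ^ n) (x n))
    (fun n : ℕ => (kerAdj T).map ((T ^ n : H →L[ℂ] H) : H →ₗ[ℂ] H)) hh ?_ ?_ ?_
  · rintro i _ ⟨x₀, hx₀, rfl⟩
    refine ⟨i, fun n => if n = i then x₀ else 0, ?_, ?_⟩
    · intro n; by_cases hn : n = i
      · simpa [hn] using hx₀
      · simp [hn]
    · rw [Finset.sum_eq_single i (fun j _ hj => by simp [hj]) (by simp)]
      rw [ContinuousLinearMap.coe_coe]
      simp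
  · exact ⟨0, 0, fun n => Submodule.zero_mem _, by simp⟩
  · rintro a b ⟨k₁, x₁, hx₁, rfl⟩ ⟨k₂, x₂, hx₂, rfl⟩
    refine ⟨max k₁ k₂, (fun n => if n < k₁ + 1 then x₁ n else 0) +
      (fun n => if n < k₂ + 1 then x₂ n else 0), ?_, ?_⟩
    · intro n
      have h1 : (if n < k₁ + 1 then x₁ n else 0) ∈ kerAdj T := by split <;> simp [hx₁]
      have h2 : (if n < k₂ + 1 then x₂ n else 0) ∈ kerAdj T := by split <;> simp [hx₂]
      exact Submodule.add_mem _ h1 h2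
    · simp only [Pi.add_apply, map_add, Finset.sum_add_distrib]
      congr 1
      · exact (aux_sum_pad k₁ (max k₁ k₂) (by omega) x₁ (fun n v => (T ^ n) v)
          (fun n => map_zero _)).symm
      · exact (aux_sum_pad k₂ (max k₁ k₂) (by omega) x₂ (fun n v => (T ^ n) v)
          (fun n => map_zero _)).symm

lemma aux_inner_key (T : H →L[ℂ] H) (w : ℂ) {z : H}
    (hz : z ∈ LinearMap.ker (((ContinuousLinearMap.adjoint T -
      (starRingEnd ℂ w) • (1 : H →L[ℂ] H)) : H →L[ℂ] H) : H →ₗ[ℂ] H)) (k : ℕ) (x : ℕ → H) :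
    ⟪∑ n ∈ Finset.range (k + 1), (T ^ n) (x n), z⟫
      = ⟪∑ n ∈ Finset.range (k + 1), w ^ n • x n, z⟫ := by
  have hz' : ContinuousLinearMap.adjoint T z = (starRingEnd ℂ w) • z := by
    have := LinearMap.mem_ker.1 hz
    rw [ContinuousLinearMap.coe_coe] at this
    rw [ContinuousLinearMap.sub_apply, ContinuousLinearMap.smul_apply,
      ContinuousLinearMap.one_apply, sub_eq_zero] at this
    exact this
  have key : ∀ (n : ℕ) (v : H), ⟪(T ^ n) v, z⟫ = (starRingEnd ℂ w) ^ n * ⟪v, z⟫ := by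
    intro n
    induction n with
    | zero => intro v; simp
    | succ n ih =>
      intro v
      have h1 : (T ^ (n + 1)) v = (T ^ n) (T v) := by rw [pow_succ]; rfl
      rw [h1, ih, ← ContinuousLinearMap.adjoint_inner_right, hz', inner_smul_right]
      ring
  rw [sum_inner, sum_inner]
  refine Finset.sum_congr rfl fun n _ => ?_
  rw [key, inner_smul_left, map_pow]

/-- if `w` is a bounded point evaluation then `H` is the closed span of
`⋃ₙ (T - w)ⁿ (ker T*)`, and the orthogonal projection `P_w` maps `ker T*` onto
`ker(T* - w̄)`. -/
theorem stmt_8 [TopologicalSpace.SeparableSpace H] (T : H →L[ℂ] H) (hT : WSP T)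
    (w : ℂ) (hw : IsBPE T w) :
    (⨆ n : ℕ, (kerAdj T).map ((((T - w • (1 : H →L[ℂ] H)) ^ n : H →L[ℂ] H)) : H →ₗ[ℂ] H)).topologicalClosure = ⊤ ∧
    ∀ y ∈ LinearMap.ker (((ContinuousLinearMap.adjoint T - (starRingEnd ℂ w) • (1 : H →L[ℂ] H)) : H →L[ℂ] H) : H →ₗ[ℂ] H),
      ∃ x ∈ kerAdj T, x - y ∈
        (LinearMap.ker (((ContinuousLinearMap.adjoint T - (starRingEnd ℂ w) • (1 : H →L[ℂ] H)) : H →L[ℂ] H) : H →ₗ[ℂ] H))ᗮ := by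
  have hT' : (⨆ n : ℕ, (kerAdj T).map ((T ^ n : H →L[ℂ] H) : H →ₗ[ℂ] H)).topologicalClosure = ⊤ := hT
  obtain ⟨c, hc, hbpe⟩ := hw

  constructor
  · rw [aux_sup_eq]
    exact hT'
  · intro y hy
    have hyS : y ∈ closure ((⨆ n : ℕ, (kerAdj T).map ((T ^ n : H →L[ℂ] H) : H →ₗ[ℂ] H) : Submodule ℂ H) : Set H) := by
      rw [← Submodule.topologicalClosure_coe, hT]; trivial
    obtain ⟨h, hhS, hhy⟩ := mem_closure_iff_seq_limit.1 hyS
    choose k x hxE hrep using fun m => aux_rep T (hhS m)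
    set g : ℕ → H := fun m => ∑ n ∈ Finset.range (k m + 1), w ^ n • x m n with hg
    have hgE : ∀ m, g m ∈ kerAdj T :=
      fun m => Submodule.sum_mem _ fun n _ => Submodule.smul_mem _ _ (hxE m n)
    -- the padded difference functions
    have hdiff : ∀ m l, ‖g m - g l‖ ≤ c * ‖h m - h l‖ := by
      intro m l
      set K := max (k m) (k l) with hK
      set X : ℕ → H := fun n => (if n < k m + 1 then x m n else 0) -
        (if n < k l + 1 then x l n else 0) with hX
      have hXE : ∀ n, X n ∈ kerAdj T := by
        intro n
        have h1 : (if n < k m + 1 then x m n else 0) ∈ kerAdj T := by split <;> simp [hxE]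
        have h2 : (if n < k l + 1 then x l n else 0) ∈ kerAdj T := by split <;> simp [hxE]
        simpa only [hX] using Submodule.sub_mem _ h1 h2
      have h1 : h m - h l = ∑ n ∈ Finset.range (K + 1), (T ^ n) (X n) := by
        simp only [hX, map_sub, Finset.sum_sub_distrib]
        rw [aux_sum_pad (k m) K (by omega) (x m) (fun n v => (T ^ n) v) (fun n => map_zero _),
          aux_sum_pad (k l) K (by omega) (x l) (fun n v => (T ^ n) v) (fun n => map_zero _),
          ← hrep m, ← hrep l]
      have h2 : g m - g l = ∑ n ∈ Finset.range (K + 1), w ^ n • X n := by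
        simp only [hX, smul_sub, Finset.sum_sub_distrib]
        rw [aux_sum_pad (k m) K (by omega) (x m) (fun n v => w ^ n • v) (fun n => smul_zero _),
          aux_sum_pad (k l) K (by omega) (x l) (fun n v => w ^ n • v) (fun n => smul_zero _)]
      rw [h1, h2]
      exact hbpe K X hXE
    have hhC : CauchySeq h := hhy.cauchySeq
    have hgC : CauchySeq g := by
      rw [Metric.cauchySeq_iff] at hhC ⊢
      intro ε hε
      obtain ⟨N, hN⟩ := hhC (ε / c) (div_pos hε hc)
      refine ⟨N, fun m hm l hl => ?_⟩
      have hN' : ‖h m - h l‖ < ε / c := by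
        rw [← dist_eq_norm]; exact hN m hm l hl
      rw [dist_eq_norm]
      calc ‖g m - g l‖ ≤ c * ‖h m - h l‖ := hdiff m l
        _ < c * (ε / c) := mul_lt_mul_of_pos_left hN' hc
        _ = ε := by field_simp
    obtain ⟨xl, hxl⟩ := cauchySeq_tendsto_of_complete hgC
    have hclosed : IsClosed ((kerAdj T : Submodule ℂ H) : Set H) :=
      ContinuousLinearMap.isClosed_ker _
    have hxlE : xl ∈ kerAdj T :=
      hclosed.mem_of_tendsto hxl (Filter.Eventually.of_forall hgE)
    refine ⟨xl, hxlE, ?_⟩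
    rw [Submodule.mem_orthogonal]
    intro z hz
    have hinner : ∀ m, ⟪h m, z⟫ = ⟪g m, z⟫ := by
      intro m
      rw [hrep m]
      exact aux_inner_key T w hz (k m) (x m)
    have l1 : Tendsto (fun m => ⟪h m, z⟫) atTop (nhds ⟪y, z⟫) :=
      hhy.inner tendsto_const_nhds
    have l2 : Tendsto (fun m => ⟪g m, z⟫) atTop (nhds ⟪xl, z⟫) :=
      hxl.inner tendsto_const_nhds
    have heq : ⟪y, z⟫ = ⟪xl, z⟫ := by
      refine tendsto_nhds_unique ?_ l2
      simpa only [hinner] using l1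
    rw [inner_sub_right]
    have hconj := congrArg (starRingEnd ℂ) heq
    rw [inner_conj_symm, inner_conj_symm] at hconj
    rw [← hconj, sub_self]
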